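/- arXiv:1303.2489 — 2 statements merged into one kernel-verified Lean document; each statement's English description precedes it below -/
import Mathlib

section
/- Matching step soundness (lseg/lseg case with allocation): suppose s satisfies the collision condition s(x)=s(x'), s(x)≠s(y), s(x')≠s(z), and the enclosure condition: s(y)≠s(z) implies s(z) ∈ dom(h₁) for any heap satisfying the context; concretely, if s,h ⊨ Σ₀ ∗ lseg(x,y) ∗ lseg(y,z) and (s(y)=s(z) or the value s(z) is the address of some non-empty conjunct of Σ₀ ∗ lseg(x,y)), then s,h ⊨ Σ₀ ∗ lseg(x',z). -/
def Heap := ℤ → Option ℤ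
def Stack := String → ℤ

def hemp : Heap := fun _ => none
def hsingle (a v : ℤ) : Heap := fun l => if l = a then some v else none
def hdisj (h₁ h₂ : Heap) : Prop := ∀ l, h₁ l = none ∨ h₂ l = none
def hunion (h₁ h₂ : Heap) : Heap := fun l =>
  match h₁ l with
  | some v => some v
  | none => h₂ l
def hdom (h : Heap) : Set ℤ := {l | h l ≠ none}

/-- Acyclic list segment: `Lseg a b h` means `h` is a list segment from `a` to `b`. -/
inductive Lseg : ℤ → ℤ → Heap → Prop
  | nil (a : ℤ) : Lseg a a hemp
  | cons {a b c : ℤ} {h : Heap} (hne : a ≠ b) (hfresh : h a = none)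
      (ht : Lseg c b h) : Lseg a b (hunion (hsingle a c) h)

/-- Spatial predicates. -/
inductive SP where
  | emp : SP
  | next (x y : String) : SP
  | lseg (x y : String) : SP

/-- Satisfaction of a single spatial predicate. -/
def sat (s : Stack) (h : Heap) : SP → Prop
  | .emp => h = hemp
  | .next x y => h = hsingle (s x) (s y)
  | .lseg x y => Lseg (s x) (s y) h

/-- Satisfaction of a spatial conjunction (list of predicates). -/
def satList (s : Stack) (h : Heap) : List SP → Prop
  | [] => h = hemp
  | S :: Sg => ∃ h₁ h₂, hdisj h₁ h₂ ∧ h = hunion h₁ h₂ ∧ sat s h₁ S ∧ satList s h₂ Sg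

/-- Emptiness condition of a spatial predicate. -/
def emptyCond (s : Stack) : SP → Prop
  | .emp => True
  | .next _ _ => False
  | .lseg x y => s x = s y

/-- Address of a spatial predicate (dummy value 0 for `emp`, which is always empty). -/
def addrVal (s : Stack) : SP → ℤ
  | .emp => 0
  | .next x _ => s x
  | .lseg x _ => s x

def collide (s : Stack) (S S' : SP) : Prop :=
  ¬ emptyCond s S ∧ ¬ emptyCond s S' ∧ addrVal s S = addrVal s S'

def wellFormed (s : Stack) (Sg : List SP) : Prop :=
  List.Pairwise (fun S S' => ¬ collide s S S') Sg

lemma hunion_emp (h : Heap) : hunion hemp h = h := by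
  funext l; rfl

lemma hunion_assoc (h₁ h₂ h₃ : Heap) :
    hunion (hunion h₁ h₂) h₃ = hunion h₁ (hunion h₂ h₃) := by
  funext l; simp only [hunion]; cases h₁ l <;> cases h₂ l <;> rfl

lemma lseg_refl_emp {a : ℤ} {h : Heap} (hl : Lseg a a h) : h = hemp := by
  cases hl with
  | nil => rfl
  | cons hne => exact absurd rfl hne

lemma lseg_append {a b c : ℤ} {h₁ h₂ : Heap}
    (hl₁ : Lseg a b h₁) (hl₂ : Lseg b c h₂) (hd : hdisj h₁ h₂)
    (hz : h₁ c = none) : Lseg a c (hunion h₁ h₂) := by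
  induction hl₁ with
  | nil => rw [hunion_emp]; exact hl₂
  | @cons a b d hh hne hfresh ht ih =>
    rw [hunion_assoc]
    have ha : (hunion (hsingle a d) hh) a = some d := by
      simp [hunion, hsingle]
    have hdd : hdisj hh h₂ := by
      intro l
      rcases hd l with h | h
      · left
        simp only [hunion, hsingle] at h
        split at h
        · exact absurd h (by simp)
        · exact h
      · right; exact h
    have h₂a : h₂ a = none := by
      rcases hd a with h | h
      · rw [ha] at h; exact absurd h (by simp)
      · exact h
    have hac : a ≠ c := by
      intro hEq; rw [← hEq, ha] at hz; exact absurd hz (by simp)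
    have hhc : hh c = none := by
      simp only [hunion, hsingle] at hz
      split at hz
      · exact absurd hz (by simp)
      · exact hz
    exact Lseg.cons hac (by simp [hunion, hfresh, h₂a]) (ih hl₂ hdd hhc)

lemma lseg_head_dom {a b : ℤ} {h : Heap} (hl : Lseg a b h) (hne : a ≠ b) :
    h a ≠ none := by
  cases hl with
  | nil => exact absurd rfl hne
  | cons hne' hfresh ht => simp [hunion, hsingle]

lemma sat_addr_dom {s : Stack} {h : Heap} {S : SP}
    (hs : sat s h S) (hne : ¬ emptyCond s S) : h (addrVal s S) ≠ none := by
  cases S with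
  | emp => exact absurd trivial hne
  | next x y => simp [sat] at hs; subst hs; simp [addrVal, hsingle]
  | lseg x y =>
    simp only [sat] at hs
    simp only [emptyCond] at hne
    exact lseg_head_dom hs hne

lemma satList_addr_dom {s : Stack} {h : Heap} {Sg : List SP} {S : SP}
    (hs : satList s h Sg) (hmem : S ∈ Sg) (hne : ¬ emptyCond s S) :
    h (addrVal s S) ≠ none := by
  induction Sg generalizing h with
  | nil => cases hmem
  | cons T Tg ih =>
    obtain ⟨h₁, h₂, hd, rfl, h1sat, h2sat⟩ := hs
    rcases List.mem_cons.mp hmem with rfl | hmem'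
    · have := sat_addr_dom h1sat hne
      simp only [hunion]
      cases hh : h₁ (addrVal s S)
      · exact absurd hh this
      · simp
    · have := ih h2sat hmem'
      simp only [hunion]
      cases hh : h₁ (addrVal s S) <;> simp [this]

theorem stmt13 (s : Stack) (h : Heap) (Sg : List SP) (x x' y z : String)
    (hcol : s x = s x') (hne1 : s x ≠ s y) (hne2 : s x' ≠ s z)
    (hs : satList s h (.lseg x y :: .lseg y z :: Sg))
    (hcheck : s y = s z ∨
      ∃ S ∈ (SP.lseg x y :: Sg), ¬ emptyCond s S ∧ s z = addrVal s S) :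
    satList s h (.lseg x' z :: Sg) := by
  obtain ⟨h₁, h₂', hd1, rfl, h1sat, h₂, h₃, hd2, rfl, h2sat, h3sat⟩ := hs
  simp only [sat] at h1sat h2sat
  rcases hcheck with hyz | ⟨S, hmem, hSne, hSaddr⟩
  · -- y = z, so h₂ = hemp
    have h2emp : h₂ = hemp := lseg_refl_emp (hyz ▸ h2sat)
    subst h2emp
    refine ⟨h₁, hunion hemp h₃, hd1, rfl, ?_, ?_⟩
    · show Lseg (s x') (s z) h₁
      rw [← hcol, ← hyz]; exact h1sat
    · rw [hunion_emp]; exact h3sat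
  · rcases List.mem_cons.mp hmem with rfl | hmem'
    · -- S = lseg x y: address is s x = s x', contradicting hne2
      simp only [addrVal] at hSaddr
      exact absurd (by rw [← hcol, hSaddr]) hne2
    · -- S ∈ Sg: s z ∈ dom h₃, hence h₁ (s z) = none
      have hz3 : h₃ (addrVal s S) ≠ none := satList_addr_dom h3sat hmem' hSne
      have hz1 : h₁ (s z) = none := by
        rcases hd1 (s z) with hh | hh
        · exact hh
        · exfalso
          rw [hSaddr] at hh
          simp only [hunion] at hh
          cases h2v : h₂ (addrVal s S) <;> rw [h2v] at hh <;> simp_all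
      have hd12 : hdisj h₁ h₂ := by
        intro l
        rcases hd1 l with hh | hh
        · left; exact hh
        · right
          simp only [hunion] at hh
          cases h2v : h₂ l <;> rw [h2v] at hh <;> simp_all
      have hd13 : hdisj h₁ h₃ := by
        intro l
        rcases hd1 l with hh | hh
        · left; exact hh
        · right
          simp only [hunion] at hh
          cases h2v : h₂ l <;> rw [h2v] at hh <;> simp_all
      refine ⟨hunion h₁ h₂, h₃, ?_, (hunion_assoc h₁ h₂ h₃).symm, ?_, h3sat⟩
      · intro l
        rcases hd13 l with hh | hh
        · rcases hd2 l with gg | gg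
          · left; simp [hunion, hh, gg]
          · right; exact gg
        · right; exact hh
      · simp only [sat]
        rw [← hcol]
        exact lseg_append h1sat h2sat hd12 hz1
end

section
/- Matching step completeness counterexample (Proposition step_twist, lseg/lseg case): suppose s(x)=s(x'), s(x)≠s(y), s(x')≠s(z), s(y)≠s(z), and s(z) is distinct from s(x) and s(y). Then there exists a heap h' such that s,h' ⊨ lseg(x,y) ∗ lseg(y,z) but s,h' ⊭ lseg(x',z). In particular h' = {s(x) ↦ s(z), s(z) ↦ s(y), s(y) ↦ s(z)} restricted appropriately works when these three addresses are pairwise distinct. -/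
lemma hunion_hemp (h : Heap) : hunion h hemp = h := by
  funext l; unfold hunion hemp; cases h l <;> rfl

lemma lseg_self {a : ℤ} {h : Heap} (H : Lseg a a h) : h = hemp := by
  cases H with
  | nil => rfl
  | cons hne => exact absurd rfl hne

lemma lseg_inv {a b : ℤ} {h : Heap} (H : Lseg a b h) (hab : a ≠ b) :
    ∃ c h₀, h = hunion (hsingle a c) h₀ ∧ h₀ a = none ∧ Lseg c b h₀ := by
  cases H with
  | nil => exact absurd rfl hab
  | cons hne hfresh ht => exact ⟨_, _, rfl, hfresh, ht⟩

theorem stmt15 (s : Stack) (x x' y z : String)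
    (hcol : s x = s x') (hxy : s x ≠ s y) (hxz : s x' ≠ s z)
    (hyz : s y ≠ s z) (hzx : s z ≠ s x) (hyx : s y ≠ s x) :
    ∃ h' : Heap,
      (∃ h₁ h₂, hdisj h₁ h₂ ∧ h' = hunion h₁ h₂ ∧
        sat s h₁ (.lseg x y) ∧ sat s h₂ (.lseg y z)) ∧
      ¬ sat s h' (.lseg x' z) := by
  classical
  refine ⟨hunion (hunion (hsingle (s x) (s z)) (hsingle (s z) (s y))) (hsingle (s y) (s z)),
    ⟨hunion (hsingle (s x) (s z)) (hsingle (s z) (s y)), hsingle (s y) (s z), ?_, rfl, ?_, ?_⟩, ?_⟩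
  · intro l
    by_cases h1 : l = s y
    · left; subst h1; simp [hunion, hsingle, hyx, hyz]
    · right; simp [hsingle, h1]
  · show Lseg (s x) (s y) _
    refine Lseg.cons hxy ?_ ?_
    · simp [hsingle, hzx.symm]
    · have : hsingle (s z) (s y) = hunion (hsingle (s z) (s y)) hemp := (hunion_hemp _).symm
      rw [this]
      exact Lseg.cons (hyz.symm) (by simp [hemp]) (Lseg.nil _)
  · show Lseg (s y) (s z) _
    have : hsingle (s y) (s z) = hunion (hsingle (s y) (s z)) hemp := (hunion_hemp _).symm
    rw [this]
    exact Lseg.cons hyz (by simp [hemp]) (Lseg.nil _)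
  · intro H
    simp only [sat] at H
    rw [← hcol] at H
    obtain ⟨c, h₀, heq, hfresh, ht⟩ := lseg_inv H (hcol ▸ hxz)
    have hx : (hunion (hunion (hsingle (s x) (s z)) (hsingle (s z) (s y))) (hsingle (s y) (s z))) (s x) = some (s z) := by
      simp [hunion, hsingle]
    have hx' : (hunion (hsingle (s x) c) h₀) (s x) = some c := by
      simp [hunion, hsingle]
    rw [heq] at hx
    rw [hx'] at hx
    have hc : c = s z := by
      have := Option.some.inj hx
      omega
    subst hc
    have h0emp : h₀ = hemp := lseg_self ht
    have hy : (hunion (hunion (hsingle (s x) (s z)) (hsingle (s z) (s y))) (hsingle (s y) (s z))) (s y) = some (s z) := by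
      simp [hunion, hsingle, hyx, hyz]
    rw [heq, h0emp] at hy
    simp [hunion, hsingle, hemp, hyx] at hy
end
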